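/- Let G be a graph with no leaves (minimum degree ≥ 2) admitting a strongly antimagic labeling with induced vertex ordering v_1, ..., v_n. Suppose j satisfies deg(v_j) ≤ deg(v_{j+1}) − 2 or j = n. Then for every integer k ≥ 3, the graph obtained from G by attaching a k-cycle at v_j (adding k−1 new vertices forming a cycle through v_j) is strongly antimagic. -/

import Mathlib

open Finset

open scoped Classical

set_option linter.unusedSectionVars false
set_option maxHeartbeats 1000000

noncomputable section

variable {V : Type*} [Fintype V] [DecidableEq V]

/-- The finset of edges of a simple graph on a finite vertex type. -/
def edges (G : SimpleGraph V) : Finset (Sym2 V) :=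
  Finset.univ.filter (fun e => e ∈ G.edgeSet)

/-- The vertex sum `φ_f(v)`: the sum of the labels of the edges incident to `v`. -/
def phi (G : SimpleGraph V) (f : Sym2 V → ℕ) (v : V) : ℕ :=
  ∑ e ∈ (edges G).filter (fun e => v ∈ e), f e

/-- The degree of a vertex: the number of edges incident to it. -/
def deg (G : SimpleGraph V) (v : V) : ℕ :=
  ((edges G).filter (fun e => v ∈ e)).card

/-- `f` is a strongly antimagic labeling of `G`: a bijection from the edge set onto
`{1, …, m}` with pairwise distinct vertex sums, such that larger degree forces a
larger vertex sum. -/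
def IsStronglyAntimagicLabeling (G : SimpleGraph V) (f : Sym2 V → ℕ) : Prop :=
  Set.BijOn f (edges G : Set (Sym2 V)) (Set.Icc 1 (edges G).card) ∧
  (∀ u v : V, u ≠ v → phi G f u ≠ phi G f v) ∧
  (∀ u v : V, deg G v < deg G u → phi G f v < phi G f u)

/-- A graph is strongly antimagic if it admits a strongly antimagic labeling. -/
def IsStronglyAntimagic (G : SimpleGraph V) : Prop :=
  ∃ f : Sym2 V → ℕ, IsStronglyAntimagicLabeling G f

/-- Attach a `k`-cycle at `x`: add `k-1` new vertices `u_1, …, u_{k-1}` and edges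
`x u_1, u_1 u_2, …, u_{k-2} u_{k-1}, u_{k-1} x`. -/
def attachCycle (G : SimpleGraph V) (x : V) (k : ℕ) : SimpleGraph (V ⊕ Fin (k - 1)) :=
  SimpleGraph.fromEdgeSet (
    (Sym2.map Sum.inl '' G.edgeSet)
    ∪ {e | ∃ i j : Fin (k - 1), (j : ℕ) = (i : ℕ) + 1 ∧ e = s(Sum.inr i, Sum.inr j)}
    ∪ {e | ∃ i : Fin (k - 1), ((i : ℕ) = 0 ∨ (i : ℕ) = k - 2) ∧ e = s(Sum.inl x, Sum.inr i)})

open Fin.NatCast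

def cycEdge (x : V) (c : ℕ) (t : ℕ) : Sym2 (V ⊕ Fin (c + 2)) :=
  if t = 0 then s(Sum.inl x, Sum.inr 0)
  else if t = c + 2 then s(Sum.inl x, Sum.inr (Fin.last (c + 1)))
  else s(Sum.inr ((t - 1 : ℕ) : Fin (c + 2)), Sum.inr ((t : ℕ) : Fin (c + 2)))

def newLabelFun (c : ℕ) (f : Sym2 V → ℕ) : V ⊕ Fin (c + 2) → V ⊕ Fin (c + 2) → ℕ
  | Sum.inl a, Sum.inl b => f s(a, b) + (c + 3)
  | Sum.inl _, Sum.inr i => if (i : ℕ) = 0 then 1 else c + 3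
  | Sum.inr i, Sum.inl _ => if (i : ℕ) = 0 then 1 else c + 3
  | Sum.inr i, Sum.inr i' => min (i : ℕ) (i' : ℕ) + 2

lemma newLabelFun_comm (c : ℕ) (f : Sym2 V → ℕ) (a b : V ⊕ Fin (c + 2)) :
    newLabelFun c f a b = newLabelFun c f b a := by
  rcases a with a | i <;> rcases b with b | i'
  · show f s(a, b) + _ = f s(b, a) + _
    rw [Sym2.eq_swap]
  · rfl
  · rfl
  · show min _ _ + 2 = min _ _ + 2
    rw [Nat.min_comm]

def newLabel (c : ℕ) (f : Sym2 V → ℕ) : Sym2 (V ⊕ Fin (c + 2)) → ℕ :=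
  Sym2.lift ⟨newLabelFun c f, newLabelFun_comm c f⟩

lemma newLabel_map (c : ℕ) (f : Sym2 V → ℕ) (e : Sym2 V) :
    newLabel c f (Sym2.map Sum.inl e) = f e + (c + 3) := by
  induction e using Sym2.ind with
  | _ a b => rfl

lemma newLabel_cycEdge (c : ℕ) (f : Sym2 V → ℕ) (x : V) {t : ℕ} (ht : t ≤ c + 2) :
    newLabel c f (cycEdge x c t) = t + 1 := by
  unfold cycEdge
  split_ifs with h1 h2
  · subst h1; simp [newLabel, newLabelFun]
  · subst h2
    show (if ((Fin.last (c+1) : Fin (c+2)) : ℕ) = 0 then 1 else c + 3) = c + 2 + 1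
    simp [Fin.last]
  · show min ((((t-1 : ℕ) : Fin (c+2))) : ℕ) (((t : ℕ) : Fin (c+2)) : ℕ) + 2 = t + 1
    rw [Fin.val_cast_of_lt (by omega), Fin.val_cast_of_lt (by omega)]
    omega

lemma mem_inl_cycEdge (x : V) (c : ℕ) (a : V) {t : ℕ} (ht : t ≤ c + 2) :
    Sum.inl a ∈ cycEdge x c t ↔ a = x ∧ (t = 0 ∨ t = c + 2) := by
  unfold cycEdge
  split_ifs with h1 h2 <;> simp [Sym2.mem_iff] <;> omega

lemma mem_inr_cycEdge (x : V) (c : ℕ) (i : Fin (c + 2)) {t : ℕ} (ht : t ≤ c + 2) :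
    Sum.inr i ∈ cycEdge x c t ↔ t = (i : ℕ) ∨ t = (i : ℕ) + 1 := by
  unfold cycEdge
  split_ifs with h1 h2
  · subst h1
    simp only [Sym2.mem_iff, Sum.inr.injEq, reduceCtorEq, false_or, Fin.ext_iff, Fin.val_zero, or_false]
    omega
  · subst h2
    simp [Sym2.mem_iff, Fin.ext_iff, Fin.last]
    omega
  · simp [Sym2.mem_iff, Fin.ext_iff, Fin.val_cast_of_lt (show t - 1 < c + 2 by omega),
      Fin.val_cast_of_lt (show t < c + 2 by omega)]
    omega

lemma cycEdge_injOn (x : V) (c : ℕ) {t t' : ℕ} (ht : t ≤ c + 2) (ht' : t' ≤ c + 2)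
    (h : cycEdge x c t = cycEdge x c t') : t = t' := by
  have := newLabel_cycEdge c (fun _ => 0) x ht
  rw [h, newLabel_cycEdge c (fun _ => 0) x ht'] at this
  omega

lemma not_mem_inr_map (c : ℕ) (i : Fin (c + 2)) (e : Sym2 V) :
    Sum.inr i ∉ Sym2.map (Sum.inl : V → V ⊕ Fin (c + 2)) e := by
  simp [Sym2.mem_map]

lemma mem_inl_map (c : ℕ) (a : V) (e : Sym2 V) :
    Sum.inl a ∈ Sym2.map (Sum.inl : V → V ⊕ Fin (c + 2)) e ↔ a ∈ e := by
  simp [Sym2.mem_map]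

lemma cycEdge_has_inr (x : V) (c : ℕ) {t : ℕ} (ht : t ≤ c + 2) :
    Sum.inr ((min t (c + 1) : ℕ) : Fin (c + 2)) ∈ cycEdge x c t := by
  rw [mem_inr_cycEdge x c _ ht, Fin.val_cast_of_lt (by omega)]
  omega

lemma disj_images (G : SimpleGraph V) (x : V) (c : ℕ) :
    Disjoint ((edges G).image (Sym2.map Sum.inl)) ((Finset.range (c + 3)).image (cycEdge x c)) := by
  rw [Finset.disjoint_left]
  rintro e he he'
  simp only [mem_image, mem_range] at he he'
  obtain ⟨e', _, rfl⟩ := he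
  obtain ⟨t, ht, het⟩ := he'
  have := cycEdge_has_inr x c (show t ≤ c + 2 by omega)
  rw [het] at this
  exact not_mem_inr_map c _ e' this
def attachC (G : SimpleGraph V) (x : V) (c : ℕ) : SimpleGraph (V ⊕ Fin (c + 2)) :=
  attachCycle G x (c + 3)

lemma cycEdge_not_diag (x : V) (c : ℕ) {t : ℕ} (ht : t ≤ c + 2) :
    ¬ (cycEdge x c t).IsDiag := by
  unfold cycEdge
  split_ifs with h1 h2
  · simp
  · simp
  · simp only [Sym2.isDiag_iff_proj_eq]
    simp only [Sum.inr.injEq, Fin.ext_iff,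
      Fin.val_cast_of_lt (show t - 1 < c + 2 by omega),
      Fin.val_cast_of_lt (show t < c + 2 by omega)]
    omega

lemma attach_edges (G : SimpleGraph V) (x : V) (c : ℕ) :
    edges (attachC G x c) =
      (edges G).image (Sym2.map Sum.inl) ∪ (Finset.range (c + 3)).image (cycEdge x c) := by
  ext e
  simp only [edges, mem_filter, mem_univ, true_and, attachC, attachCycle,
    SimpleGraph.edgeSet_fromEdgeSet, Set.mem_diff, Set.mem_union, Set.mem_image,
    Set.mem_setOf_eq, mem_union, mem_image, mem_range]
  constructor
  · rintro ⟨(⟨e', he', rfl⟩ | ⟨i, j, hij, rfl⟩) | ⟨i, hi, rfl⟩, hdiag⟩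
    · exact Or.inl ⟨e', by simpa using he', rfl⟩
    · refine Or.inr ⟨(j : ℕ), by omega, ?_⟩
      unfold cycEdge
      rw [if_neg (by omega), if_neg (by omega)]
      have h1 : (((j : ℕ) - 1 : ℕ) : Fin (c + 2)) = i := by
        apply Fin.ext
        rw [Fin.val_cast_of_lt (by omega)]
        omega
      have h2 : (((j : ℕ) : ℕ) : Fin (c + 2)) = j := by
        apply Fin.ext
        rw [Fin.val_cast_of_lt (by omega)]
      rw [h1, h2]
      rfl

    · rcases hi with h0 | hl
      · refine Or.inr ⟨0, by omega, ?_⟩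
        unfold cycEdge
        rw [if_pos rfl]
        have : (0 : Fin (c + 2)) = i := by apply Fin.ext; simp [h0]
        rw [this]
        rfl
      · refine Or.inr ⟨c + 2, by omega, ?_⟩
        unfold cycEdge
        rw [if_neg (by omega), if_pos rfl]
        have : Fin.last (c + 1) = i := by apply Fin.ext; simp [Fin.last]; omega
        rw [this]
        rfl
  · rintro (⟨e', he', rfl⟩ | ⟨t, ht, rfl⟩)
    · have he'' : e' ∈ G.edgeSet := by simpa [edges] using he'
      refine ⟨Or.inl (Or.inl ⟨e', he'', rfl⟩), ?_⟩
      induction e' using Sym2.ind with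
      | _ a b =>
        have hab : a ≠ b := (G.ne_of_adj (by simpa using he''))
        simp [Sym2.isDiag_iff_proj_eq, hab]
    · refine ⟨?_, cycEdge_not_diag x c (by omega)⟩
      unfold cycEdge
      split_ifs with h1 h2
      · exact Or.inr ⟨(0 : Fin (c + 2)), Or.inl rfl, rfl⟩
      · exact Or.inr ⟨Fin.last (c + 1), Or.inr (by simp [Fin.last]), rfl⟩
      · refine Or.inl (Or.inr ⟨_, _, ?_, rfl⟩)
        rw [Fin.val_cast_of_lt (show t < c + 2 by omega),
          Fin.val_cast_of_lt (show t - 1 < c + 2 by omega)]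
        omega

lemma edges_G_eq (G : SimpleGraph V) (e : Sym2 V) : e ∈ edges G ↔ e ∈ G.edgeSet := by
  simp [edges]

lemma card_attach_edges (G : SimpleGraph V) (x : V) (c : ℕ) :
    (edges (attachC G x c)).card = (edges G).card + (c + 3) := by
  rw [attach_edges, Finset.card_union_of_disjoint (disj_images G x c),
    Finset.card_image_of_injOn ((Sym2.map.injective Sum.inl_injective).injOn),
    Finset.card_image_of_injOn]
  · simp
  · intro t ht t' ht' h
    simp only [coe_range, Set.mem_Iio] at ht ht'
    exact cycEdge_injOn x c (by omega) (by omega) h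

lemma filter_attach_inr (G : SimpleGraph V) (x : V) (c : ℕ) (i : Fin (c + 2)) :
    (edges (attachC G x c)).filter (fun e => Sum.inr i ∈ e) =
      {cycEdge x c (i : ℕ), cycEdge x c ((i : ℕ) + 1)} := by
  rw [attach_edges, filter_union, Finset.filter_image, Finset.filter_image]
  have h1 : (edges G).filter (fun e => Sum.inr i ∈ Sym2.map Sum.inl e) = ∅ := by
    rw [Finset.filter_eq_empty_iff]
    intro e _
    exact not_mem_inr_map c i e
  have h2 : (range (c + 3)).filter (fun t => Sum.inr i ∈ cycEdge x c t) = {(i : ℕ), (i : ℕ) + 1} := by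
    ext t
    simp only [mem_filter, mem_range, mem_insert, mem_singleton]
    constructor
    · rintro ⟨ht, hmem⟩
      rw [mem_inr_cycEdge x c i (by omega)] at hmem
      exact hmem
    · have hi : (i : ℕ) < c + 2 := i.isLt
      rintro (rfl | rfl)
      · exact ⟨by omega, (mem_inr_cycEdge x c i (by omega)).2 (Or.inl rfl)⟩
      · exact ⟨by omega, (mem_inr_cycEdge x c i (by omega)).2 (Or.inr rfl)⟩
  rw [h1, h2]
  simp

lemma filter_attach_inl (G : SimpleGraph V) (x : V) (c : ℕ) {a : V} (ha : a ≠ x) :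
    (edges (attachC G x c)).filter (fun e => Sum.inl a ∈ e) =
      ((edges G).filter (fun e => a ∈ e)).image (Sym2.map Sum.inl) := by
  rw [attach_edges, filter_union, Finset.filter_image, Finset.filter_image]
  have h2 : (range (c + 3)).filter (fun t => Sum.inl a ∈ cycEdge x c t) = ∅ := by
    rw [Finset.filter_eq_empty_iff]
    intro t ht hmem
    rw [mem_range] at ht
    rw [mem_inl_cycEdge x c a (by omega)] at hmem
    exact ha hmem.1
  rw [h2]
  simp only [image_empty, union_empty]
  congr 1
  ext e
  simp [mem_inl_map]

lemma filter_attach_x (G : SimpleGraph V) (x : V) (c : ℕ) :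
    (edges (attachC G x c)).filter (fun e => Sum.inl x ∈ e) =
      ((edges G).filter (fun e => x ∈ e)).image (Sym2.map Sum.inl)
        ∪ {cycEdge x c 0, cycEdge x c (c + 2)} := by
  rw [attach_edges, filter_union, Finset.filter_image, Finset.filter_image]
  have h2 : (range (c + 3)).filter (fun t => Sum.inl x ∈ cycEdge x c t) = {0, c + 2} := by
    ext t
    simp only [mem_filter, mem_range, mem_insert, mem_singleton]
    constructor
    · rintro ⟨ht, hmem⟩
      rw [mem_inl_cycEdge x c x (by omega)] at hmem
      exact hmem.2
    · rintro (rfl | rfl)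
      · exact ⟨by omega, (mem_inl_cycEdge x c x (by omega)).2 ⟨rfl, Or.inl rfl⟩⟩
      · exact ⟨by omega, (mem_inl_cycEdge x c x (by omega)).2 ⟨rfl, Or.inr rfl⟩⟩
  rw [h2]
  congr 1
  · congr 1
    ext e
    simp [mem_inl_map]
  · simp

lemma cycEdge_ne (x : V) (c : ℕ) {t t' : ℕ} (ht : t ≤ c + 2) (ht' : t' ≤ c + 2) (h : t ≠ t') :
    cycEdge x c t ≠ cycEdge x c t' := fun he => h (cycEdge_injOn x c ht ht' he)

lemma pair_subset_image (x : V) (c : ℕ) :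
    ({cycEdge x c 0, cycEdge x c (c + 2)} : Finset (Sym2 (V ⊕ Fin (c + 2)))) ⊆
      (Finset.range (c + 3)).image (cycEdge x c) := by
  intro e he
  rw [mem_insert, mem_singleton] at he
  rcases he with rfl | rfl
  · exact mem_image_of_mem _ (by simp)
  · exact mem_image_of_mem _ (by simp)

lemma deg_attach_inr (G : SimpleGraph V) (x : V) (c : ℕ) (i : Fin (c + 2)) :
    deg (attachC G x c) (Sum.inr i) = 2 := by
  rw [deg, filter_attach_inr]
  exact Finset.card_pair (cycEdge_ne x c (by omega) (by omega) (by omega))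

lemma deg_attach_inl (G : SimpleGraph V) (x : V) (c : ℕ) {a : V} (ha : a ≠ x) :
    deg (attachC G x c) (Sum.inl a) = deg G a := by
  rw [deg, filter_attach_inl G x c ha,
    Finset.card_image_of_injOn ((Sym2.map.injective Sum.inl_injective).injOn), deg]

lemma deg_attach_x (G : SimpleGraph V) (x : V) (c : ℕ) :
    deg (attachC G x c) (Sum.inl x) = deg G x + 2 := by
  rw [deg, filter_attach_x, Finset.card_union_of_disjoint, 
    Finset.card_image_of_injOn ((Sym2.map.injective Sum.inl_injective).injOn), deg,
    Finset.card_pair (cycEdge_ne x c (by omega) (by omega) (by omega))]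
  exact Disjoint.mono_right (pair_subset_image x c)
    (Disjoint.mono_left (Finset.image_subset_image (filter_subset _ _)) (disj_images G x c))


lemma phi_attach_inr (G : SimpleGraph V) (x : V) (c : ℕ) (f : Sym2 V → ℕ) (i : Fin (c + 2)) :
    phi (attachC G x c) (newLabel c f) (Sum.inr i) = 2 * (i : ℕ) + 3 := by
  have hi := i.isLt
  rw [phi, filter_attach_inr,
    Finset.sum_pair (cycEdge_ne x c (t := (i:ℕ)) (t' := (i:ℕ)+1) (by omega) (by omega) (by omega)),
    newLabel_cycEdge c f x (by omega), newLabel_cycEdge c f x (by omega)]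
  omega

lemma phi_attach_inl (G : SimpleGraph V) (x : V) (c : ℕ) (f : Sym2 V → ℕ) {a : V} (ha : a ≠ x) :
    phi (attachC G x c) (newLabel c f) (Sum.inl a) =
      phi G f a + deg G a * (c + 3) := by
  rw [phi, filter_attach_inl G x c ha,
    Finset.sum_image (fun e _ e' _ h => Sym2.map.injective Sum.inl_injective h)]
  simp only [newLabel_map]
  rw [Finset.sum_add_distrib, Finset.sum_const, smul_eq_mul, phi, deg]

lemma phi_attach_x (G : SimpleGraph V) (x : V) (c : ℕ) (f : Sym2 V → ℕ) :
    phi (attachC G x c) (newLabel c f) (Sum.inl x) =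
      phi G f x + deg G x * (c + 3) + (c + 4) := by
  rw [phi, filter_attach_x, Finset.sum_union (Disjoint.mono_right (pair_subset_image x c)
    (Disjoint.mono_left (Finset.image_subset_image (filter_subset _ _)) (disj_images G x c))),
    Finset.sum_image (fun e _ e' _ h => Sym2.map.injective Sum.inl_injective h),
    Finset.sum_pair (cycEdge_ne x c (t := 0) (t' := c+2) (by omega) (by omega) (by omega)),
    newLabel_cycEdge c f x (by omega), newLabel_cycEdge c f x (by omega)]
  simp only [newLabel_map]
  rw [Finset.sum_add_distrib, Finset.sum_const, smul_eq_mul]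
  rw [phi, deg]
  ring

theorem attach_strong (G : SimpleGraph V) (f : Sym2 V → ℕ)
    (hf : IsStronglyAntimagicLabeling G f) (hdelta : ∀ w : V, 2 ≤ deg G w) (x : V)
    (hlt : ∀ w : V, w ≠ x → deg G w ≤ deg G x → phi G f w < phi G f x)
    (hge : ∀ w : V, deg G x < deg G w → deg G x + 2 ≤ deg G w ∧ phi G f x < phi G f w)
    (c : ℕ) :
    IsStronglyAntimagicLabeling (attachC G x c) (newLabel c f) := by
  have hx2 : 2 ≤ deg G x := hdelta x
  have hPge : ∀ a : V, deg G a ≤ phi G f a := by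
    intro a
    have h := Finset.card_nsmul_le_sum ((edges G).filter (fun e => a ∈ e)) f 1
      (fun e he => (hf.1.1 (Finset.mem_coe.2 (Finset.mem_of_mem_filter e he))).1)
    simpa [deg, phi] using h
  obtain ⟨hmapsTo', hinj', hsurj'⟩ := hf.1
  constructor
  · -- BijOn
    rw [card_attach_edges]
    refine ⟨?_, ?_, ?_⟩
    · intro e he
      rw [Finset.mem_coe, attach_edges, Finset.mem_union] at he
      rcases he with he | he <;> rw [Finset.mem_image] at he
      · obtain ⟨e', he', rfl⟩ := he
        have h := hmapsTo' (Finset.mem_coe.2 he')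
        rw [newLabel_map]
        simp only [Set.mem_Icc] at h ⊢
        omega
      · obtain ⟨t, ht, rfl⟩ := he
        rw [Finset.mem_range] at ht
        rw [newLabel_cycEdge c f x (by omega)]
        simp only [Set.mem_Icc]
        omega
    · intro e1 h1 e2 h2 hF
      rw [Finset.mem_coe, attach_edges, Finset.mem_union] at h1 h2
      rcases h1 with h1 | h1 <;> rcases h2 with h2 | h2 <;> rw [Finset.mem_image] at h1 h2
      · obtain ⟨e1', he1', rfl⟩ := h1
        obtain ⟨e2', he2', rfl⟩ := h2
        rw [newLabel_map, newLabel_map] at hF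
        exact congrArg _ (hinj' (Finset.mem_coe.2 he1') (Finset.mem_coe.2 he2') (by omega))
      · obtain ⟨e1', he1', rfl⟩ := h1
        obtain ⟨t, ht, rfl⟩ := h2
        rw [Finset.mem_range] at ht
        have h := hmapsTo' (Finset.mem_coe.2 he1')
        simp only [Set.mem_Icc] at h
        rw [newLabel_map, newLabel_cycEdge c f x (by omega)] at hF
        omega
      · obtain ⟨t, ht, rfl⟩ := h1
        obtain ⟨e2', he2', rfl⟩ := h2
        rw [Finset.mem_range] at ht
        have h := hmapsTo' (Finset.mem_coe.2 he2')
        simp only [Set.mem_Icc] at h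
        rw [newLabel_map, newLabel_cycEdge c f x (by omega)] at hF
        omega
      · obtain ⟨t1, ht1, rfl⟩ := h1
        obtain ⟨t2, ht2, rfl⟩ := h2
        rw [Finset.mem_range] at ht1 ht2
        rw [newLabel_cycEdge c f x (by omega), newLabel_cycEdge c f x (by omega)] at hF
        exact congrArg _ (show t1 = t2 by omega)
    · intro y hy
      simp only [Set.mem_Icc] at hy
      by_cases hyc : y ≤ c + 3
      · refine ⟨cycEdge x c (y - 1), ?_, ?_⟩
        · rw [Finset.mem_coe, attach_edges, Finset.mem_union]
          exact Or.inr (Finset.mem_image_of_mem _ (Finset.mem_range.2 (by omega)))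
        · rw [newLabel_cycEdge c f x (by omega)]
          omega
      · obtain ⟨e, he, hfe⟩ := hsurj'
          (show y - (c + 3) ∈ Set.Icc 1 (edges G).card by
            simp only [Set.mem_Icc]; omega)
        refine ⟨Sym2.map Sum.inl e, ?_, ?_⟩
        · rw [Finset.mem_coe, attach_edges, Finset.mem_union]
          exact Or.inl (Finset.mem_image_of_mem _ (Finset.mem_coe.1 he))
        · rw [newLabel_map, hfe]
          omega
  constructor
  · -- injectivity of phi
    rintro (a | i) (b | i') hne
    · have hab : a ≠ b := fun h => hne (by rw [h])
      by_cases hax : a = x <;> by_cases hbx : b = x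
      · exact absurd (hax.trans hbx.symm) hab
      · rw [hax, phi_attach_x, phi_attach_inl G x c f hbx]
        rcases le_or_gt (deg G b) (deg G x) with h | h
        · have h1 := hlt b hbx h
          have h2 : deg G b * (c + 3) ≤ deg G x * (c + 3) := Nat.mul_le_mul_right _ h
          omega
        · have h2 := hge b h
          have h3 : (deg G x + 2) * (c + 3) ≤ deg G b * (c + 3) :=
            Nat.mul_le_mul_right _ h2.1
          have h4 : (deg G x + 2) * (c + 3) = deg G x * (c + 3) + 2 * (c + 3) := by ring
          omega
      · rw [hbx, phi_attach_x, phi_attach_inl G x c f hax]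
        rcases le_or_gt (deg G a) (deg G x) with h | h
        · have h1 := hlt a hax h
          have h2 : deg G a * (c + 3) ≤ deg G x * (c + 3) := Nat.mul_le_mul_right _ h
          omega
        · have h2 := hge a h
          have h3 : (deg G x + 2) * (c + 3) ≤ deg G a * (c + 3) :=
            Nat.mul_le_mul_right _ h2.1
          have h4 : (deg G x + 2) * (c + 3) = deg G x * (c + 3) + 2 * (c + 3) := by ring
          omega
      · rw [phi_attach_inl G x c f hax, phi_attach_inl G x c f hbx]
        rcases lt_trichotomy (deg G a) (deg G b) with h | h | h
        · have h1 := hf.2.2 b a h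
          have h2 : deg G a * (c + 3) ≤ deg G b * (c + 3) := Nat.mul_le_mul_right _ h.le
          omega
        · have h1 := hf.2.1 a b hab
          rw [h]
          omega
        · have h1 := hf.2.2 a b h
          have h2 : deg G b * (c + 3) ≤ deg G a * (c + 3) := Nat.mul_le_mul_right _ h.le
          omega
    · rw [phi_attach_inr]
      have hi' := i'.isLt
      by_cases hax : a = x
      · rw [hax, phi_attach_x]
        have h1 := hPge x
        have h2 : 2 * (c + 3) ≤ deg G x * (c + 3) := Nat.mul_le_mul_right _ hx2
        omega
      · rw [phi_attach_inl G x c f hax]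
        have h1 := hPge a
        have h2 : 2 * (c + 3) ≤ deg G a * (c + 3) := Nat.mul_le_mul_right _ (hdelta a)
        have h3 := hdelta a
        omega
    · rw [phi_attach_inr]
      have hi := i.isLt
      by_cases hbx : b = x
      · rw [hbx, phi_attach_x]
        have h1 := hPge x
        have h2 : 2 * (c + 3) ≤ deg G x * (c + 3) := Nat.mul_le_mul_right _ hx2
        omega
      · rw [phi_attach_inl G x c f hbx]
        have h1 := hPge b
        have h2 : 2 * (c + 3) ≤ deg G b * (c + 3) := Nat.mul_le_mul_right _ (hdelta b)
        have h3 := hdelta b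
        omega
    · rw [phi_attach_inr, phi_attach_inr]
      intro h
      exact hne (congrArg Sum.inr (Fin.ext (by omega)))
  · -- monotonicity
    rintro (a | i) (b | i') hdeg
    · by_cases hax : a = x <;> by_cases hbx : b = x
      · rw [hax, hbx] at hdeg; exact absurd hdeg (lt_irrefl _)
      · rw [hax] at hdeg ⊢
        rw [deg_attach_x, deg_attach_inl G x c hbx] at hdeg
        rw [phi_attach_x, phi_attach_inl G x c f hbx]
        rcases le_or_gt (deg G b) (deg G x) with h | h
        · have h1 := hlt b hbx h
          have h2 : deg G b * (c + 3) ≤ deg G x * (c + 3) := Nat.mul_le_mul_right _ h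
          omega
        · have h2 := (hge b h).1
          omega
      · rw [hbx] at hdeg ⊢
        rw [deg_attach_inl G x c hax, deg_attach_x] at hdeg
        rw [phi_attach_inl G x c f hax, phi_attach_x]
        have h2 := hge a (by omega)
        have h3 : (deg G x + 3) * (c + 3) ≤ deg G a * (c + 3) :=
          Nat.mul_le_mul_right _ (by omega)
        have h4 : (deg G x + 3) * (c + 3) = deg G x * (c + 3) + 3 * (c + 3) := by ring
        have h5 := h2.2
        omega
      · rw [deg_attach_inl G x c hax, deg_attach_inl G x c hbx] at hdeg
        rw [phi_attach_inl G x c f hax, phi_attach_inl G x c f hbx]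
        have h1 := hf.2.2 a b hdeg
        have h2 : deg G b * (c + 3) ≤ deg G a * (c + 3) := Nat.mul_le_mul_right _ hdeg.le
        omega
    · rw [deg_attach_inr] at hdeg
      rw [phi_attach_inr]
      have hi' := i'.isLt
      by_cases hax : a = x
      · rw [hax, phi_attach_x]
        have h1 := hPge x
        have h2 : 2 * (c + 3) ≤ deg G x * (c + 3) := Nat.mul_le_mul_right _ hx2
        omega
      · rw [phi_attach_inl G x c f hax]
        rw [deg_attach_inl G x c hax] at hdeg
        have h1 := hPge a
        have h2 : 3 * (c + 3) ≤ deg G a * (c + 3) := Nat.mul_le_mul_right _ (by omega)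
        omega
    · rw [deg_attach_inr] at hdeg
      by_cases hbx : b = x
      · rw [hbx] at hdeg; rw [deg_attach_x] at hdeg; omega
      · rw [deg_attach_inl G x c hbx] at hdeg
        have := hdelta b
        omega
    · rw [deg_attach_inr, deg_attach_inr] at hdeg
      omega


/-- attaching a `k`-cycle (`k ≥ 3`) at `v j` of a leafless strongly
antimagic graph, where `v j` is last in the φ-ordering or `deg (v j) ≤ deg (v (j+1)) - 2`,
yields a strongly antimagic graph. -/
theorem stmt_4 (G : SimpleGraph V) (hdelta : ∀ w : V, 2 ≤ deg G w)
    (f : Sym2 V → ℕ) (hf : IsStronglyAntimagicLabeling G f)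
    (n : ℕ) (hn : n = Fintype.card V)
    (v : Fin n → V) (hv : Function.Bijective v)
    (hmono : StrictMono (fun i : Fin n => phi G f (v i)))
    (j : Fin n)
    (hj : (j : ℕ) + 1 = n ∨
      ∃ h : (j : ℕ) + 1 < n, deg G (v j) + 2 ≤ deg G (v ⟨(j : ℕ) + 1, h⟩))
    (k : ℕ) (hk : 3 ≤ k) :
    IsStronglyAntimagic (attachCycle G (v j) k) := by
  obtain ⟨c, rfl⟩ : ∃ c, k = c + 3 := ⟨k - 3, by omega⟩
  have hdegmono : ∀ i i' : Fin n, i ≤ i' → deg G (v i) ≤ deg G (v i') := by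
    intro i i' h
    by_contra h'
    push_neg at h'
    have h1 := hf.2.2 (v i) (v i') h'
    have h2 : phi G f (v i) ≤ phi G f (v i') := hmono.le_iff_le.2 h
    omega
  have hafter : ∀ i : Fin n, j < i → deg G (v j) + 2 ≤ deg G (v i) := by
    intro i hji
    rcases hj with hj1 | ⟨hlt2, hdeg2⟩
    · exfalso
      have h1 := i.isLt
      have h2 : (j : ℕ) < (i : ℕ) := hji
      omega
    · have h3 : (⟨(j : ℕ) + 1, hlt2⟩ : Fin n) ≤ i := by
        rw [Fin.le_def]
        exact hji
      exact le_trans hdeg2 (hdegmono _ _ h3)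
  have hge : ∀ w : V, deg G (v j) < deg G w →
      deg G (v j) + 2 ≤ deg G w ∧ phi G f (v j) < phi G f w := by
    intro w hw
    have hphi := hf.2.2 w (v j) hw
    obtain ⟨i, rfl⟩ := hv.2 w
    have hji : j < i := hmono.lt_iff_lt.1 hphi
    exact ⟨hafter i hji, hphi⟩
  have hlt : ∀ w : V, w ≠ v j → deg G w ≤ deg G (v j) → phi G f w < phi G f (v j) := by
    intro w hne hdeg
    obtain ⟨i, rfl⟩ := hv.2 w
    have hij : i ≠ j := fun h => hne (by rw [h])
    rcases lt_or_gt_of_ne hij with h | h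
    · exact hmono h
    · exfalso
      have := hafter i h
      omega
  exact ⟨newLabel c f, attach_strong G f hf hdelta (v j) hlt hge c⟩
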